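/- In the blow-up setting of an isolated real node, the image of A in A' under π is exactly { f ∈ A' | there exists c ∈ ℝ with f − c·1 ∈ 𝔫 }, where 𝔫 is the maximal ideal of A' generated by the images of x and y; i.e., A consists precisely of those elements of its normalization A' whose residue in A'/𝔫 ≅ ℂ lies in ℝ. -/

import Mathlib

open MvPolynomial

noncomputable section

/-- The maximal ideal `(x,y)` of `ℝ[x,y]`, where `x = X 0` and `y = X 1`. -/
def mIdeal : Ideal (MvPolynomial (Fin 2) ℝ) := Ideal.span {X 0, X 1}

theorem mIdeal_eq_ker :
    mIdeal = RingHom.ker (constantCoeff : MvPolynomial (Fin 2) ℝ →+* ℝ) := by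
  have himg : (MvPolynomial.X '' (Set.univ : Set (Fin 2)) :
      Set (MvPolynomial (Fin 2) ℝ)) = {X 0, X 1} := by
    ext p
    simp [Set.eq_univ_iff_forall, Fin.exists_fin_two, Set.mem_image]
    tauto
  ext x
  rw [mIdeal, ← himg, mem_ideal_span_X_image]
  simp only [RingHom.mem_ker, constantCoeff_eq, ← MvPolynomial.notMem_support_iff]
  constructor
  · intro h h0
    obtain ⟨i, _, hi⟩ := h 0 h0
    simp at hi
  · intro h m hm
    by_contra hc
    push_neg at hc
    have : m = 0 := by
      ext i
      simpa using hc i (Set.mem_univ i)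
    exact h (this ▸ hm)

instance mIdeal_isMaximal : mIdeal.IsMaximal := by
  rw [mIdeal_eq_ker]
  exact RingHom.ker_isMaximal_of_surjective _ (fun r => ⟨C r, by simp⟩)

instance mIdeal_isPrime : mIdeal.IsPrime := Ideal.IsMaximal.isPrime' _

/-- `R₀`, the localization of `ℝ[x,y]` at the maximal ideal `(x,y)`. -/
abbrev R0 := Localization.AtPrime mIdeal

instance R0commRing : CommRing R0 := inferInstance

/-- The image of `x` in `R₀`. -/
def xm : R0 := algebraMap (MvPolynomial (Fin 2) ℝ) R0 (X 0)

/-- The image of `y` in `R₀`. -/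
def ym : R0 := algebraMap (MvPolynomial (Fin 2) ℝ) R0 (X 1)

/-- The ideal `(y - x·z)` of `R₀[z]`. -/
def sRel : Ideal (Polynomial R0) := Ideal.span {Polynomial.C ym - Polynomial.C xm * Polynomial.X}

/-- The ring `S = R₀[z]/(y - x·z)`. -/
abbrev Sring := Polynomial R0 ⧸ sRel

instance SringCommRing : CommRing Sring := inferInstance

/-- The canonical map `R₀ → S`. -/
def toS : R0 →+* Sring := (Ideal.Quotient.mk sRel).comp Polynomial.C

/-- The image of `z` in `S`. -/
def zS : Sring := Ideal.Quotient.mk sRel Polynomial.X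

/-- `F = F₂ + ⋯ + Fₙ`. -/
def Fpoly (n : ℕ) (Fi : ℕ → MvPolynomial (Fin 2) ℝ) : MvPolynomial (Fin 2) ℝ :=
  ∑ i ∈ Finset.Icc 2 n, Fi i

/-- The coefficient embedding `ℝ → R₀[z]`. -/
def coeffHom : ℝ →+* Polynomial R0 :=
  Polynomial.C.comp ((algebraMap (MvPolynomial (Fin 2) ℝ) R0).comp
    (MvPolynomial.C : ℝ →+* MvPolynomial (Fin 2) ℝ))

/-- For `p ∈ ℝ[x,y]`, the polynomial `p(1,z) ∈ R₀[z]`. -/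
def subst1z (p : MvPolynomial (Fin 2) ℝ) : Polynomial R0 :=
  MvPolynomial.eval₂ coeffHom ![1, Polynomial.X] p

/-- `F' = F₂(1,z) + x·F₃(1,z) + ⋯ + x^{n-2}·Fₙ(1,z)`, as an element of `S`. -/
def F'elem (n : ℕ) (Fi : ℕ → MvPolynomial (Fin 2) ℝ) : Sring :=
  Ideal.Quotient.mk sRel (∑ i ∈ Finset.Icc 2 n, Polynomial.C xm ^ (i - 2) * subst1z (Fi i))

/-- `A = R₀/(F)`. -/
abbrev Aring (n : ℕ) (Fi : ℕ → MvPolynomial (Fin 2) ℝ) :=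
  R0 ⧸ Ideal.span {algebraMap (MvPolynomial (Fin 2) ℝ) R0 (Fpoly n Fi)}

/-- `A' = S/(F')`. -/
abbrev A'ring (n : ℕ) (Fi : ℕ → MvPolynomial (Fin 2) ℝ) := Sring ⧸ Ideal.span {F'elem n Fi}

/-- The quotient map `R₀ → A`. -/
def toA (n : ℕ) (Fi : ℕ → MvPolynomial (Fin 2) ℝ) : R0 →+* Aring n Fi := Ideal.Quotient.mk _

/-- The natural map `R₀ → A'`. -/
def toA' (n : ℕ) (Fi : ℕ → MvPolynomial (Fin 2) ℝ) : R0 →+* A'ring n Fi :=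
  (Ideal.Quotient.mk (Ideal.span {F'elem n Fi})).comp toS

/-- The image of `z` in `A'`. -/
def zA' (n : ℕ) (Fi : ℕ → MvPolynomial (Fin 2) ℝ) : A'ring n Fi :=
  Ideal.Quotient.mk _ zS

/-- The ideal `𝔫 = (x, y)` of `A'`. -/
def nId (n : ℕ) (Fi : ℕ → MvPolynomial (Fin 2) ℝ) : Ideal (A'ring n Fi) :=
  Ideal.span {toA' n Fi xm, toA' n Fi ym}

/-- The constant embedding `ℝ → A'`. -/
def constA' (n : ℕ) (Fi : ℕ → MvPolynomial (Fin 2) ℝ) : ℝ →+* A'ring n Fi :=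
  (toA' n Fi).comp ((algebraMap (MvPolynomial (Fin 2) ℝ) R0).comp
    (MvPolynomial.C : ℝ →+* MvPolynomial (Fin 2) ℝ))


namespace BlowupAux

set_option maxHeartbeats 1000000
set_option synthInstance.maxHeartbeats 200000

variable (n : ℕ) (Fi : ℕ → MvPolynomial (Fin 2) ℝ)

/-- The quotient map `R₀[z] → A'`. -/
def mkA' : Polynomial R0 →+* A'ring n Fi :=
  (Ideal.Quotient.mk (Ideal.span {F'elem n Fi})).comp (Ideal.Quotient.mk sRel)

lemma toA'_eq (r : R0) : toA' n Fi r = mkA' n Fi (Polynomial.C r) := rfl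

lemma zA'_eq : zA' n Fi = mkA' n Fi Polynomial.X := rfl

lemma xz_eq_y_S : toS xm * zS = toS ym := by
  show Ideal.Quotient.mk sRel (Polynomial.C xm) * Ideal.Quotient.mk sRel Polynomial.X
      = Ideal.Quotient.mk sRel (Polynomial.C ym)
  rw [← map_mul, Ideal.Quotient.eq]
  have : Polynomial.C xm * Polynomial.X - Polynomial.C ym
      = -(Polynomial.C ym - Polynomial.C xm * Polynomial.X) := by ring
  rw [this]
  exact neg_mem (Ideal.subset_span rfl)

lemma xz_eq_y : toA' n Fi xm * zA' n Fi = toA' n Fi ym := by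
  have : toA' n Fi = (Ideal.Quotient.mk (Ideal.span {F'elem n Fi})).comp toS := rfl
  have hz : zA' n Fi = Ideal.Quotient.mk (Ideal.span {F'elem n Fi}) zS := rfl
  rw [this, hz]
  simp only [RingHom.comp_apply, ← map_mul, xz_eq_y_S]

lemma xpow_mul_zpow : ∀ (e k : ℕ), e ≤ k →
    toA' n Fi xm ^ k * zA' n Fi ^ e = toA' n Fi (xm ^ (k - e) * ym ^ e) := by
  intro e
  induction e with
  | zero => intro k _; simp [← map_pow]
  | succ e ih =>
      intro k h
      have hk : k = (k - 1) + 1 := by omega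
      calc toA' n Fi xm ^ k * zA' n Fi ^ (e + 1)
          = (toA' n Fi xm ^ (k - 1) * zA' n Fi ^ e) * (toA' n Fi xm * zA' n Fi) := by
            have hx : toA' n Fi xm ^ k = toA' n Fi xm ^ (k - 1) * toA' n Fi xm := by
              rw [← pow_succ, ← hk]
            rw [hx, pow_succ]; ring
        _ = toA' n Fi (xm ^ (k - 1 - e) * ym ^ e) * toA' n Fi ym := by
            rw [ih (k - 1) (by omega), xz_eq_y]
        _ = toA' n Fi (xm ^ (k - (e + 1)) * ym ^ (e + 1)) := by
            rw [← map_mul]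
            congr 1
            have : k - 1 - e = k - (e + 1) := by omega
            rw [this]; ring

lemma hom_deg {φ : MvPolynomial (Fin 2) ℝ} {i : ℕ} (h : φ.IsHomogeneous i)
    {d : Fin 2 →₀ ℕ} (hd : MvPolynomial.coeff d φ ≠ 0) : d 0 + d 1 = i := by
  have h1 := h hd
  rw [Finsupp.weight_apply, Finsupp.sum_fintype _ _ (fun _ => rfl)] at h1
  simpa [Fin.sum_univ_two] using h1

lemma c2_ne_zero {F2 : MvPolynomial (Fin 2) ℝ} (hhom : F2.IsHomogeneous 2)
    (hne : F2 ≠ 0) (hirr : Irreducible F2) :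
    MvPolynomial.coeff (Finsupp.single 1 2) F2 ≠ 0 := by
  intro hc
  have hdvd : (X 0 : MvPolynomial (Fin 2) ℝ) ∣ F2 := by
    rw [MvPolynomial.X_dvd_iff_modMonomial_eq_zero]
    apply MvPolynomial.ext
    intro m
    by_cases hle : Finsupp.single (0:Fin 2) 1 ≤ m
    · rw [MvPolynomial.coeff_modMonomial_of_le _ hle, MvPolynomial.coeff_zero]
    · rw [MvPolynomial.coeff_modMonomial_of_not_le _ hle, MvPolynomial.coeff_zero]
      by_contra hne2
      have hm0 : m 0 = 0 := by
        have := (Finsupp.single_le_iff (f := m)).not.mp hle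
        omega
      have hdeg := hom_deg hhom hne2
      have hm : m = Finsupp.single 1 2 := by
        ext j
        fin_cases j <;> simp_all [Finsupp.single_apply]
      rw [hm] at hne2
      exact hne2 hc
  obtain ⟨g, hg⟩ := hdvd
  rcases hirr.isUnit_or_isUnit hg with hu | hu
  · have := hu.map (constantCoeff : MvPolynomial (Fin 2) ℝ →+* ℝ)
    simp at this
  · have hgc : constantCoeff g ≠ 0 :=
      (hu.map (constantCoeff : MvPolynomial (Fin 2) ℝ →+* ℝ)).ne_zero
    have hco : MvPolynomial.coeff (Finsupp.single (0:Fin 2) 1) F2 = constantCoeff g := by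
      rw [hg]
      rw [show (Finsupp.single (0:Fin 2) 1) = Finsupp.single (0:Fin 2) 1 + 0 from by simp]
      rw [MvPolynomial.coeff_X_mul]
      rfl
    have : MvPolynomial.coeff (Finsupp.single (0:Fin 2) 1) F2 ≠ 0 := hco ▸ hgc
    have hdeg := hom_deg hhom this
    simp [Finsupp.single_apply] at hdeg

/-- Elements expressible as `s + t·z` with `s, t` from `R₀`. -/
def Pd (w : A'ring n Fi) : Prop :=
  ∃ s t : R0, w = toA' n Fi s + toA' n Fi t * zA' n Fi

lemma Pd_zero : Pd n Fi 0 := ⟨0, 0, by simp⟩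

lemma Pd_add {a b : A'ring n Fi} (ha : Pd n Fi a) (hb : Pd n Fi b) : Pd n Fi (a + b) := by
  obtain ⟨s1, t1, rfl⟩ := ha; obtain ⟨s2, t2, rfl⟩ := hb
  exact ⟨s1 + s2, t1 + t2, by rw [map_add, map_add]; ring⟩

lemma Pd_sum {α : Type*} (s : Finset α) (f : α → A'ring n Fi)
    (h : ∀ a ∈ s, Pd n Fi (f a)) : Pd n Fi (∑ a ∈ s, f a) := by
  classical
  induction s using Finset.induction_on with
  | empty => simpa using Pd_zero n Fi
  | insert _ _ hni ih =>
      rw [Finset.sum_insert hni]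
      exact Pd_add n Fi (h _ (Finset.mem_insert_self _ _))
        (ih fun a ha => h a (Finset.mem_insert_of_mem ha))

lemma constA'_eq (c : ℝ) :
    constA' n Fi c = toA' n Fi (algebraMap (MvPolynomial (Fin 2) ℝ) R0 (C c)) := rfl

lemma mkA'_coeffHom (c : ℝ) : mkA' n Fi (coeffHom c) = constA' n Fi c := rfl

lemma mkA'_subst1z (p : MvPolynomial (Fin 2) ℝ) :
    mkA' n Fi (subst1z p) =
      ∑ m ∈ p.support, constA' n Fi (MvPolynomial.coeff m p) * zA' n Fi ^ (m 1) := by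
  rw [subst1z, MvPolynomial.eval₂_eq', map_sum]
  refine Finset.sum_congr rfl fun m _ => ?_
  rw [map_mul, mkA'_coeffHom]
  congr 1
  rw [Fin.prod_univ_two]
  simp only [Matrix.cons_val_zero, Matrix.cons_val_one, Matrix.head_cons, one_pow, one_mul]
  rw [map_pow, zA'_eq]

lemma term_decomp (i : ℕ) (hi : 2 ≤ i) (p : MvPolynomial (Fin 2) ℝ)
    (hp : p.IsHomogeneous i) :
    Pd n Fi (mkA' n Fi (Polynomial.C xm ^ (i - 2) * subst1z p)
      - constA' n Fi (MvPolynomial.coeff (Finsupp.single 1 i) p)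
        * toA' n Fi (ym ^ (i - 2)) * zA' n Fi ^ 2) := by
  classical
  have hx : mkA' n Fi (Polynomial.C xm ^ (i - 2) * subst1z p)
      = ∑ m ∈ p.support,
          constA' n Fi (MvPolynomial.coeff m p)
            * (toA' n Fi xm ^ (i - 2) * zA' n Fi ^ (m 1)) := by
    rw [map_mul, map_pow, ← toA'_eq, mkA'_subst1z, Finset.mul_sum]
    exact Finset.sum_congr rfl fun m _ => by ring
  have hy : constA' n Fi (MvPolynomial.coeff (Finsupp.single 1 i) p)
        * toA' n Fi (ym ^ (i - 2)) * zA' n Fi ^ 2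
      = ∑ m ∈ p.support,
          (if m = Finsupp.single 1 i then
            constA' n Fi (MvPolynomial.coeff m p)
              * toA' n Fi (ym ^ (i - 2)) * zA' n Fi ^ 2 else 0) := by
    rw [Finset.sum_ite_eq' p.support (Finsupp.single 1 i)]
    split_ifs with hmem
    · rfl
    · rw [MvPolynomial.notMem_support_iff.mp hmem, map_zero, zero_mul, zero_mul]
  rw [hx, hy, ← Finset.sum_sub_distrib]
  apply Pd_sum
  intro m hm
  have hcm : MvPolynomial.coeff m p ≠ 0 := MvPolynomial.mem_support_iff.mp hm
  have hdeg : m 0 + m 1 = i := hom_deg hp hcm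
  by_cases htop : m 1 = i
  · have hmeq : m = Finsupp.single 1 i := by
      ext j
      fin_cases j <;> simp [Finsupp.single_apply] <;> omega
    rw [if_pos hmeq]
    have hz : zA' n Fi ^ (m 1) = zA' n Fi ^ (i - 2) * zA' n Fi ^ 2 := by
      rw [← pow_add, htop]
      congr 1
      omega
    have hxz : toA' n Fi xm ^ (i - 2) * zA' n Fi ^ (i - 2)
        = toA' n Fi (ym ^ (i - 2)) := by
      rw [xpow_mul_zpow n Fi (i - 2) (i - 2) le_rfl]
      simp
    have : constA' n Fi (MvPolynomial.coeff m p)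
          * (toA' n Fi xm ^ (i - 2) * zA' n Fi ^ (m 1))
        = constA' n Fi (MvPolynomial.coeff m p)
          * toA' n Fi (ym ^ (i - 2)) * zA' n Fi ^ 2 := by
      rw [hz, ← hxz]; ring
    rw [this, sub_self]
    exact Pd_zero n Fi
  · have hne : m ≠ Finsupp.single 1 i := fun h => htop (by simp [h])
    rw [if_neg hne, sub_zero]
    by_cases hsecond : m 1 = i - 1
    · have hz : zA' n Fi ^ (m 1) = zA' n Fi ^ (i - 2) * zA' n Fi := by
        rw [← pow_succ, hsecond]
        congr 1
        omega
      have hxz : toA' n Fi xm ^ (i - 2) * zA' n Fi ^ (i - 2)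
          = toA' n Fi (ym ^ (i - 2)) := by
        rw [xpow_mul_zpow n Fi (i - 2) (i - 2) le_rfl]; simp
      refine ⟨0, algebraMap (MvPolynomial (Fin 2) ℝ) R0 (C (MvPolynomial.coeff m p))
        * ym ^ (i - 2), ?_⟩
      rw [map_zero, zero_add, map_mul, ← constA'_eq, hz, ← hxz]
      ring
    · have hle : m 1 ≤ i - 2 := by omega
      refine ⟨algebraMap (MvPolynomial (Fin 2) ℝ) R0 (C (MvPolynomial.coeff m p))
        * (xm ^ (i - 2 - m 1) * ym ^ (m 1)), 0, ?_⟩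
      rw [map_zero, zero_mul, add_zero, map_mul, ← constA'_eq,
        xpow_mul_zpow n Fi (m 1) (i - 2) hle]

lemma F'_image_zero :
    (Ideal.Quotient.mk (Ideal.span {F'elem n Fi})) (F'elem n Fi) = 0 :=
  Ideal.Quotient.eq_zero_iff_mem.mpr (Ideal.subset_span rfl)

lemma z2_decomp (hn : 2 ≤ n) (hhom : ∀ i, (Fi i).IsHomogeneous i)
    (hc2 : MvPolynomial.coeff (Finsupp.single 1 2) (Fi 2) ≠ 0) :
    Pd n Fi (zA' n Fi ^ 2) := by
  classical
  set r : MvPolynomial (Fin 2) ℝ :=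
    ∑ i ∈ Finset.Icc 2 n, C (MvPolynomial.coeff (Finsupp.single 1 i) (Fi i)) * X 1 ^ (i - 2)
    with hr
  have hmk0 : (0 : A'ring n Fi)
      = ∑ i ∈ Finset.Icc 2 n, mkA' n Fi (Polynomial.C xm ^ (i - 2) * subst1z (Fi i)) := by
    rw [← map_sum]
    exact (F'_image_zero n Fi).symm
  have hrsum : toA' n Fi (algebraMap (MvPolynomial (Fin 2) ℝ) R0 r) * zA' n Fi ^ 2
      = ∑ i ∈ Finset.Icc 2 n,
          constA' n Fi (MvPolynomial.coeff (Finsupp.single 1 i) (Fi i))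
            * toA' n Fi (ym ^ (i - 2)) * zA' n Fi ^ 2 := by
    rw [hr, map_sum, map_sum, Finset.sum_mul]
    refine Finset.sum_congr rfl fun i _ => ?_
    rw [map_mul, map_mul, map_pow, map_pow, ← constA'_eq, ← map_pow]
    rfl
  have hPd : Pd n Fi (0 - toA' n Fi (algebraMap (MvPolynomial (Fin 2) ℝ) R0 r)
      * zA' n Fi ^ 2) := by
    rw [hmk0, hrsum, ← Finset.sum_sub_distrib]
    apply Pd_sum
    intro i hi
    exact term_decomp n Fi i (Finset.mem_Icc.mp hi).1 (Fi i) (hhom i)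
  have hcr : constantCoeff r = MvPolynomial.coeff (Finsupp.single 1 2) (Fi 2) := by
    rw [hr, map_sum]
    rw [Finset.sum_eq_single 2]
    · simp
    · intro i hi hne
      have h2i : 2 ≤ i := (Finset.mem_Icc.mp hi).1
      have : i - 2 ≠ 0 := by omega
      simp [zero_pow this]
    · intro h
      exact absurd (Finset.mem_Icc.mpr ⟨le_rfl, hn⟩) h
  have hunit : IsUnit (algebraMap (MvPolynomial (Fin 2) ℝ) R0 r) := by
    rw [IsLocalization.AtPrime.isUnit_to_map_iff R0 mIdeal r]
    intro hmem
    rw [mIdeal_eq_ker] at hmem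
    exact hc2 (hcr ▸ hmem)
  obtain ⟨s, t, hst⟩ := hPd
  rw [zero_sub] at hst
  set u := hunit.unit with hu
  set w : R0 := ↑u⁻¹ with hw
  have h1 : toA' n Fi w * toA' n Fi (algebraMap (MvPolynomial (Fin 2) ℝ) R0 r) = 1 := by
    rw [← map_mul, hw]
    rw [show (↑u⁻¹ : R0) * (algebraMap (MvPolynomial (Fin 2) ℝ) R0 r) = 1 from by
      rw [show (algebraMap (MvPolynomial (Fin 2) ℝ) R0 r) = ↑u from rfl]
      exact u.inv_mul]
    exact map_one _
  refine ⟨-(w * s), -(w * t), ?_⟩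
  have h2 : zA' n Fi ^ 2
      = -(toA' n Fi w * (toA' n Fi s + toA' n Fi t * zA' n Fi)) := by
    rw [← hst]
    calc zA' n Fi ^ 2 = (toA' n Fi w * toA' n Fi (algebraMap (MvPolynomial (Fin 2) ℝ) R0 r))
          * zA' n Fi ^ 2 := by rw [h1, one_mul]
      _ = -(toA' n Fi w * -(toA' n Fi (algebraMap (MvPolynomial (Fin 2) ℝ) R0 r)
            * zA' n Fi ^ 2)) := by ring
  rw [h2, map_neg, map_neg, map_mul, map_mul]
  ring

lemma mkA'_surjective : Function.Surjective (mkA' n Fi) :=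
  (Ideal.Quotient.mk_surjective).comp Ideal.Quotient.mk_surjective

lemma Pd_all (hn : 2 ≤ n) (hhom : ∀ i, (Fi i).IsHomogeneous i)
    (hc2 : MvPolynomial.coeff (Finsupp.single 1 2) (Fi 2) ≠ 0) (v : A'ring n Fi) :
    Pd n Fi v := by
  obtain ⟨q, rfl⟩ := mkA'_surjective n Fi v
  obtain ⟨s2, t2, h2⟩ := z2_decomp n Fi hn hhom hc2
  induction q using Polynomial.induction_on with
  | C a => exact ⟨a, 0, by simp [toA'_eq]⟩
  | add p q hp hq => rw [map_add]; exact Pd_add n Fi hp hq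
  | monomial k a ih =>
      obtain ⟨s, t, hst⟩ := ih
      have hstep : mkA' n Fi (Polynomial.C a * Polynomial.X ^ (k + 1))
          = mkA' n Fi (Polynomial.C a * Polynomial.X ^ k) * zA' n Fi := by
        rw [zA'_eq, ← map_mul]
        congr 1
        ring
      rw [hstep, hst]
      refine ⟨t * s2, s + t * t2, ?_⟩
      rw [map_mul, map_add, map_mul]
      calc (toA' n Fi s + toA' n Fi t * zA' n Fi) * zA' n Fi
          = toA' n Fi s * zA' n Fi + toA' n Fi t * zA' n Fi ^ 2 := by ring
        _ = toA' n Fi s * zA' n Fi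
            + toA' n Fi t * (toA' n Fi s2 + toA' n Fi t2 * zA' n Fi) := by rw [h2]
        _ = _ := by ring

lemma nId_sub_range (hn : 2 ≤ n) (hhom : ∀ i, (Fi i).IsHomogeneous i)
    (hc2 : MvPolynomial.coeff (Finsupp.single 1 2) (Fi 2) ≠ 0)
    {v : A'ring n Fi} (hv : v ∈ nId n Fi) : v ∈ Set.range (toA' n Fi) := by
  obtain ⟨a, b, hab⟩ := Ideal.mem_span_pair.mp hv
  obtain ⟨s2, t2, h2⟩ := z2_decomp n Fi hn hhom hc2
  obtain ⟨s, t, hs⟩ := Pd_all n Fi hn hhom hc2 a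
  obtain ⟨s', t', hs'⟩ := Pd_all n Fi hn hhom hc2 b
  have hzy : toA' n Fi ym * zA' n Fi = toA' n Fi (xm * s2 + t2 * ym) := by
    calc toA' n Fi ym * zA' n Fi = (toA' n Fi xm * zA' n Fi) * zA' n Fi := by
          rw [xz_eq_y]
      _ = toA' n Fi xm * zA' n Fi ^ 2 := by ring
      _ = toA' n Fi xm * (toA' n Fi s2 + toA' n Fi t2 * zA' n Fi) := by rw [h2]
      _ = toA' n Fi (xm * s2) + toA' n Fi t2 * (toA' n Fi xm * zA' n Fi) := by
          rw [map_mul]; ring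
      _ = toA' n Fi (xm * s2) + toA' n Fi t2 * toA' n Fi ym := by rw [xz_eq_y]
      _ = _ := by rw [map_add, map_mul, map_mul]
  have ha' : a * toA' n Fi xm = toA' n Fi (s * xm + t * ym) := by
    rw [hs, map_add, map_mul, map_mul, ← xz_eq_y]
    ring
  have hb' : b * toA' n Fi ym = toA' n Fi (s' * ym + t' * (xm * s2 + t2 * ym)) := by
    rw [hs', map_add, map_mul, map_mul, ← hzy]
    ring
  exact ⟨s * xm + t * ym + (s' * ym + t' * (xm * s2 + t2 * ym)),
    by rw [map_add, ← ha', ← hb']; exact hab⟩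

lemma exists_const (r : R0) :
    ∃ c : ℝ, r - algebraMap (MvPolynomial (Fin 2) ℝ) R0 (C c) ∈ Ideal.span {xm, ym} := by
  obtain ⟨⟨p, s⟩, rfl⟩ := IsLocalization.mk'_surjective mIdeal.primeCompl r
  have hmemker : ∀ x : MvPolynomial (Fin 2) ℝ, constantCoeff x = 0 → x ∈ mIdeal :=
    fun x hx => by rw [mIdeal_eq_ker]; exact RingHom.mem_ker.mpr hx
  have hs0 : constantCoeff (s : MvPolynomial (Fin 2) ℝ) ≠ 0 := by
    have hs2 : (s : MvPolynomial (Fin 2) ℝ) ∉ mIdeal := s.2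
    exact fun h0 => hs2 (hmemker _ h0)
  set c : ℝ := constantCoeff p / constantCoeff (s : MvPolynomial (Fin 2) ℝ) with hc
  refine ⟨c, ?_⟩
  set q : MvPolynomial (Fin 2) ℝ :=
    C (constantCoeff (s : MvPolynomial (Fin 2) ℝ)) * p - C (constantCoeff p) * (s : MvPolynomial (Fin 2) ℝ) with hq
  have hq0 : q ∈ mIdeal := by
    rw [mIdeal_eq_ker]
    simp [hq, mul_comm]
  have hqmem : algebraMap (MvPolynomial (Fin 2) ℝ) R0 q ∈ Ideal.span ({xm, ym} : Set R0) := by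
    obtain ⟨a, b, hab⟩ := Ideal.mem_span_pair.mp hq0
    rw [← hab, map_add, map_mul, map_mul]
    exact Ideal.add_mem _
      (Ideal.mul_mem_left _ _ (Ideal.subset_span (by simp [xm])))
      (Ideal.mul_mem_left _ _ (Ideal.subset_span (by simp [ym])))
  have hsu : IsUnit (algebraMap (MvPolynomial (Fin 2) ℝ) R0 (s : MvPolynomial (Fin 2) ℝ)) :=
    IsLocalization.map_units R0 s
  have hs0u : IsUnit (algebraMap (MvPolynomial (Fin 2) ℝ) R0
      (C (constantCoeff (s : MvPolynomial (Fin 2) ℝ)))) := by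
    rw [IsLocalization.AtPrime.isUnit_to_map_iff R0 mIdeal]
    intro hmem
    apply hs0
    have h2 : C (constantCoeff (s : MvPolynomial (Fin 2) ℝ))
        ∈ RingHom.ker (constantCoeff : MvPolynomial (Fin 2) ℝ →+* ℝ) := by
      rw [← mIdeal_eq_ker]; exact hmem
    simpa [RingHom.mem_ker] using h2
  have key : (IsLocalization.mk' R0 p s - algebraMap (MvPolynomial (Fin 2) ℝ) R0 (C c))
        * algebraMap (MvPolynomial (Fin 2) ℝ) R0 (s : MvPolynomial (Fin 2) ℝ)
        * algebraMap (MvPolynomial (Fin 2) ℝ) R0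
            (C (constantCoeff (s : MvPolynomial (Fin 2) ℝ)))
      = algebraMap (MvPolynomial (Fin 2) ℝ) R0 q := by
    rw [sub_mul, IsLocalization.mk'_spec, sub_mul, ← map_mul, ← map_mul, ← map_mul, ← map_sub]
    congr 1
    have hcc : C (σ := Fin 2) (constantCoeff (s : MvPolynomial (Fin 2) ℝ)) * C c
        = C (constantCoeff p) := by
      rw [← C_mul, hc, mul_div_cancel₀ _ hs0]
    rw [hq]
    linear_combination (-(s : MvPolynomial (Fin 2) ℝ)) * hcc
  obtain ⟨us, hus⟩ := hsu
  obtain ⟨us0, hus0⟩ := hs0u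
  set L := IsLocalization.mk' R0 p s - algebraMap (MvPolynomial (Fin 2) ℝ) R0 (C c) with hL
  have ha : (↑us : R0) * ↑us⁻¹ = 1 := us.mul_inv
  have hb : (↑us0 : R0) * ↑us0⁻¹ = 1 := us0.mul_inv
  have hfin : L = algebraMap (MvPolynomial (Fin 2) ℝ) R0 q * ↑us⁻¹ * ↑us0⁻¹ := by
    rw [← key, ← hus, ← hus0]
    linear_combination (-(L * ((↑us : R0) * ↑us⁻¹))) * hb + (-L) * ha
  rw [hfin]
  exact Ideal.mul_mem_right _ _ (Ideal.mul_mem_right _ _ hqmem)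

end BlowupAux


set_option maxHeartbeats 1000000 in
set_option synthInstance.maxHeartbeats 400000 in
theorem blowup_image_of_A
    (n : ℕ) (hn : 2 ≤ n) (Fi : ℕ → MvPolynomial (Fin 2) ℝ)
    (hhom : ∀ i, (Fi i).IsHomogeneous i)
    (hF2ne : Fi 2 ≠ 0) (hF2irr : Irreducible (Fi 2))
    (π : Aring n Fi →+* A'ring n Fi)
    (hπ : π.comp (toA n Fi) = toA' n Fi) :
    Set.range π = {f : A'ring n Fi | ∃ c : ℝ, f - constA' n Fi c ∈ nId n Fi} := by
  classical
  have hc2 := BlowupAux.c2_ne_zero (hhom 2) hF2ne hF2irr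
  have hrange : Set.range π = Set.range (toA' n Fi) := by
    ext w
    constructor
    · rintro ⟨a, rfl⟩
      obtain ⟨r, rfl⟩ := Ideal.Quotient.mk_surjective
        (I := Ideal.span {algebraMap (MvPolynomial (Fin 2) ℝ) R0 (Fpoly n Fi)}) a
      exact ⟨r, (RingHom.congr_fun hπ r).symm⟩
    · rintro ⟨r, rfl⟩
      exact ⟨toA n Fi r, RingHom.congr_fun hπ r⟩
  rw [hrange]
  ext w
  simp only [Set.mem_range, Set.mem_setOf_eq]
  constructor
  · rintro ⟨r, rfl⟩
    obtain ⟨c, hc⟩ := BlowupAux.exists_const r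
    refine ⟨c, ?_⟩
    rw [BlowupAux.constA'_eq, ← map_sub]
    obtain ⟨a, b, hab⟩ := Ideal.mem_span_pair.mp hc
    rw [← hab, map_add, map_mul, map_mul]
    exact Ideal.add_mem _
      (Ideal.mul_mem_left _ _ (Ideal.subset_span (Set.mem_insert _ _)))
      (Ideal.mul_mem_left _ _ (Ideal.subset_span (Set.mem_insert_of_mem _ rfl)))
  · rintro ⟨c, hcmem⟩
    obtain ⟨r, hr⟩ := BlowupAux.nId_sub_range n Fi hn hhom hc2 hcmem
    refine ⟨r + algebraMap (MvPolynomial (Fin 2) ℝ) R0 (C c), ?_⟩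
    rw [map_add, hr, ← BlowupAux.constA'_eq]
    ring
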